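/- arXiv:2403.07418 — 2 statements merged into one kernel-verified Lean document; each statement's English description precedes it below -/
import Mathlib

section
/- Let λ be a self-conjugate partition with heights (a_1,...,a_r) and let H_1,...,H_r be the formal power series over ℚ defined by H_j(z) = Σ_{k≥0} C_k^{λ,i} z^{k+1} where i is any index with block f_λ(i) = j and C_k^{λ,i} counts λ-plane trees on k+1 vertices whose root is labelled i. Then these series satisfy H_j = z + H_j · (a_1 H_1 + ... + a_{r−j+1} H_{r−j+1}) for all j ∈ [r]. -/
def cellMem (L : ℕ → ℕ) (i j : ℕ) : Prop := 1 ≤ i ∧ 1 ≤ j ∧ j ≤ L i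

def IsPartitionOfLength (L : ℕ → ℕ) (l : ℕ) : Prop :=
  (∀ i j, 1 ≤ i → i ≤ j → L j ≤ L i) ∧ ∀ i, 1 ≤ i → (1 ≤ L i ↔ i ≤ l)

def SelfConjugate (L : ℕ → ℕ) : Prop := ∀ i j, cellMem L i j ↔ cellMem L j i

inductive LTree where
  | node : ℕ → List LTree → LTree

namespace LTree

def label : LTree → ℕ
  | node a _ => a

def size : LTree → ℕ
  | node _ ts => 1 + (ts.attach.map (fun t => size t.1)).sum
decreasing_by
  have := List.sizeOf_lt_of_mem t.2
  simp only [node.sizeOf_spec]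
  omega

def countLabel (i : ℕ) : LTree → ℕ
  | node a ts => (if a = i then 1 else 0) + (ts.attach.map (fun t => countLabel i t.1)).sum
decreasing_by
  have := List.sizeOf_lt_of_mem t.2
  simp only [node.sizeOf_spec]
  omega

def Valid (P : ℕ → ℕ → Prop) : LTree → Prop
  | node a ts => ∀ t ∈ ts, P a t.label ∧ Valid P t
decreasing_by
  rename_i ht
  have := List.sizeOf_lt_of_mem ht
  simp only [node.sizeOf_spec]
  omega

def LabelsLe (l : ℕ) : LTree → Prop
  | node a ts => (1 ≤ a ∧ a ≤ l) ∧ ∀ t ∈ ts, LabelsLe l t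
decreasing_by
  rename_i ht
  have := List.sizeOf_lt_of_mem ht
  simp only [node.sizeOf_spec]
  omega

end LTree

/-- A `λ`-plane tree: labels in `[1, l]` and every edge `{u, v}` satisfies
`(c u, c v) ∈ λ`. -/
def IsLambdaPlaneTree (L : ℕ → ℕ) (l : ℕ) (t : LTree) : Prop :=
  LTree.LabelsLe l t ∧ LTree.Valid (fun u v => cellMem L u v) t

/-- An `r`-plane tree: labels in `[1, r]` and every edge `{u, v}` satisfies
`c u + c v ≤ r + 1`. -/
def IsRPlaneTree (r : ℕ) (t : LTree) : Prop :=
  LTree.LabelsLe r t ∧ LTree.Valid (fun u v => u + v ≤ r + 1) t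

/-- `C_k^λ`: the number of `λ`-plane trees on `k + 1` vertices. -/
noncomputable def lambdaPlaneCount (L : ℕ → ℕ) (l k : ℕ) : ℕ :=
  Nat.card {t : LTree // t.size = k + 1 ∧ IsLambdaPlaneTree L l t}

/-- The number of `r`-plane trees on `k + 1` vertices. -/
noncomputable def rPlaneCount (r k : ℕ) : ℕ :=
  Nat.card {t : LTree // t.size = k + 1 ∧ IsRPlaneTree r t}

namespace LTree

theorem size_node (a : ℕ) (ts : List LTree) :
    (node a ts).size = 1 + (ts.map size).sum := by
  rw [size]; congr 1; simp [List.attach_map_val]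

theorem valid_node (P : ℕ → ℕ → Prop) (a : ℕ) (ts : List LTree) :
    Valid P (node a ts) ↔ ∀ t ∈ ts, P a t.label ∧ Valid P t := by
  rw [Valid]

theorem labelsLe_node (l a : ℕ) (ts : List LTree) :
    LabelsLe l (node a ts) ↔ (1 ≤ a ∧ a ≤ l) ∧ ∀ t ∈ ts, LabelsLe l t := by
  rw [LabelsLe]

theorem size_pos (t : LTree) : 1 ≤ t.size := by
  cases t with | node a ts => rw [size_node]; omega

theorem size_cons (a : ℕ) (u : LTree) (ts : List LTree) :
    (node a (u :: ts)).size = u.size + (node a ts).size := by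
  rw [size_node, size_node, List.map_cons, List.sum_cons]; omega

theorem exists_list_subtype {s : Set LTree} :
    ∀ ts : List LTree, (∀ t ∈ ts, t ∈ s) → ∃ us : List ↥s, us.map Subtype.val = ts := by
  intro ts
  induction ts with
  | nil => exact fun _ => ⟨[], rfl⟩
  | cons t ts ih =>
    intro h
    obtain ⟨us, hus⟩ := ih (fun x hx => h x (List.mem_cons_of_mem _ hx))
    exact ⟨⟨t, h t (List.mem_cons_self)⟩ :: us, by simp [hus]⟩

theorem finite_trees (l : ℕ) : ∀ N : ℕ, {t : LTree | t.size ≤ N ∧ LabelsLe l t}.Finite := by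
  intro N
  induction N with
  | zero =>
    convert Set.finite_empty
    ext t; simp only [Set.mem_setOf_eq, Set.mem_empty_iff_false, iff_false, not_and]
    intro h; have := size_pos t; omega
  | succ N ih =>
    have hs : Finite ↥{t : LTree | t.size ≤ N ∧ LabelsLe l t} := ih
    have hlist : {ts : List LTree | ts.length ≤ N ∧
        ∀ t ∈ ts, t ∈ {t : LTree | t.size ≤ N ∧ LabelsLe l t}}.Finite := by
      have h1 : {us : List ↥{t : LTree | t.size ≤ N ∧ LabelsLe l t} |
          us.length ≤ N}.Finite := List.finite_length_le _ N
      refine (h1.image (List.map Subtype.val)).subset ?_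
      rintro ts ⟨hlen, hmem⟩
      obtain ⟨us, hus⟩ := exists_list_subtype ts hmem
      have : us.length = ts.length := by rw [← hus, List.length_map]
      exact ⟨us, by show us.length ≤ N; omega, hus⟩
    refine (((Set.finite_Icc 1 l).prod hlist).image
      (fun p : ℕ × List LTree => node p.1 p.2)).subset ?_
    rintro t ⟨hsize, hlab⟩
    cases t with
    | node a ts =>
      rw [size_node] at hsize
      rw [labelsLe_node] at hlab
      refine ⟨(a, ts), ⟨⟨hlab.1.1, hlab.1.2⟩, ?_, ?_⟩, rfl⟩
      · show ts.length ≤ N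
        have : ts.length ≤ (ts.map size).sum := by
          have := List.length_le_sum_of_one_le (ts.map size) ?_
          · simpa using this
          · intro x hx
            obtain ⟨t, ht, rfl⟩ := List.mem_map.mp hx
            exact size_pos t
        omega
      · show ∀ t ∈ ts, _
        intro t ht
        constructor
        · have : t.size ≤ (ts.map size).sum :=
            List.single_le_sum (by intro x _; omega) _ (List.mem_map_of_mem (f := size) ht)
          omega
        · exact hlab.2 t ht

/-- graft (u, node a ts) = node a (u :: ts) -/
def graft : LTree × LTree → LTree
  | (u, node a ts) => node a (u :: ts)

theorem graft_injective : Function.Injective graft := by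
  rintro ⟨u, v⟩ ⟨u', v'⟩ h
  cases v with | node b ts =>
  cases v' with | node b' ts' =>
  simp only [graft, node.injEq, List.cons.injEq] at h
  simp [h.1, h.2.1, h.2.2]

end LTree

open LTree

/-- trees of size n+1, λ-valid, root labelled i -/
def TS (L : ℕ → ℕ) (l i n : ℕ) : Set LTree :=
  {t | t.size = n + 1 ∧ IsLambdaPlaneTree L l t ∧ t.label = i}

theorem TS_finite (L : ℕ → ℕ) (l i n : ℕ) : (TS L l i n).Finite :=
  (finite_trees l (n + 1)).subset (by rintro t ⟨h1, h2, _⟩; exact ⟨le_of_eq h1, h2.1⟩)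

theorem TS_zero (L : ℕ → ℕ) (l i : ℕ) (hi1 : 1 ≤ i) (hil : i ≤ l) :
    TS L l i 0 = {node i []} := by
  ext t
  constructor
  · rintro ⟨h1, _, h3⟩
    cases t with
    | node a ts =>
      cases ts with
      | nil =>
        simp only [Set.mem_singleton_iff, node.injEq]
        exact ⟨h3, trivial⟩
      | cons u rest =>
        exfalso
        rw [size_cons] at h1
        have := size_pos u
        have := size_pos (node a rest)
        omega
  · rintro rfl
    refine ⟨by rw [size_node]; simp, ⟨?_, ?_⟩, rfl⟩
    · rw [labelsLe_node]; exact ⟨⟨hi1, hil⟩, by simp⟩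
    · rw [valid_node]; simp

theorem ncard_sprod {α β : Type*} (A : Set α) (B : Set β) :
    (A ×ˢ B).ncard = A.ncard * B.ncard := by
  rw [← Nat.card_coe_set_eq, ← Nat.card_coe_set_eq, ← Nat.card_coe_set_eq,
    Nat.card_congr (Equiv.Set.prod A B), Nat.card_prod]

theorem ncard_finset_biUnion {ι α : Type*} [DecidableEq ι] (s : Finset ι) (f : ι → Set α)
    (hf : ∀ i ∈ s, (f i).Finite)
    (hd : ∀ i ∈ s, ∀ j ∈ s, i ≠ j → Disjoint (f i) (f j)) :
    (⋃ i ∈ s, f i).ncard = ∑ i ∈ s, (f i).ncard := by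
  induction s using Finset.induction with
  | empty => simp
  | @insert a s hnot ih =>
    have hfin1 : (f a).Finite := hf a (Finset.mem_insert_self a s)
    have hfin2 : (⋃ x ∈ s, f x).Finite := by
      apply Set.Finite.biUnion s.finite_toSet
      intro i hi
      exact hf i (Finset.mem_insert_of_mem hi)
    have hdisj : Disjoint (f a) (⋃ x ∈ s, f x) := by
      rw [Set.disjoint_iUnion₂_right]
      intro i hi
      exact hd a (Finset.mem_insert_self a s) i (Finset.mem_insert_of_mem hi)
        (fun h => hnot (h ▸ hi))
    rw [Finset.set_biUnion_insert, Finset.sum_insert hnot,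
      Set.ncard_union_eq hdisj hfin1 hfin2,
      ih (fun i hi => hf i (Finset.mem_insert_of_mem hi))
        (fun i hi j hj hij => hd i (Finset.mem_insert_of_mem hi) j
          (Finset.mem_insert_of_mem hj) hij)]

theorem TS_succ (L : ℕ → ℕ) (l i k : ℕ) (hi1 : 1 ≤ i) (hil : i ≤ l) :
    (TS L l i (k + 1)).ncard =
      ∑ s ∈ Finset.range (k + 1), ∑ j' ∈ Finset.Icc 1 (L i),
        (TS L l j' s).ncard * (TS L l i (k - s)).ncard := by
  have himg : graft '' (⋃ p ∈ Finset.range (k + 1) ×ˢ Finset.Icc 1 (L i),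
      (TS L l p.2 p.1) ×ˢ (TS L l i (k - p.1))) = TS L l i (k + 1) := by
    apply Set.eq_of_subset_of_subset
    · rintro _ ⟨⟨u, v⟩, hmem, rfl⟩
      simp only [Set.mem_iUnion, Finset.mem_coe, Finset.mem_product, Finset.mem_range,
        Finset.mem_Icc, exists_prop, Set.mem_prod] at hmem
      obtain ⟨⟨s, j'⟩, ⟨⟨hs, hj1, hj2⟩, hu, hv⟩⟩ := hmem
      dsimp only at hs hj1 hj2 hu hv
      obtain ⟨husize, ⟨hulab, huval⟩, hulabel⟩ := hu
      obtain ⟨hvsize, ⟨hvlab, hvval⟩, hvlabel⟩ := hv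
      cases v with
      | node b rest =>
        have hb : b = i := hvlabel
        subst hb
        have hg : graft (u, node b rest) = node b (u :: rest) := rfl
        rw [hg]
        refine ⟨?_, ⟨?_, ?_⟩, rfl⟩
        · rw [size_cons, husize, hvsize]; omega
        · rw [labelsLe_node] at hvlab ⊢
          refine ⟨hvlab.1, fun t ht => ?_⟩
          rcases List.mem_cons.mp ht with rfl | ht
          · exact hulab
          · exact hvlab.2 t ht
        · rw [valid_node] at hvval ⊢
          intro t ht
          rcases List.mem_cons.mp ht with rfl | ht
          · exact ⟨⟨hi1, hulabel ▸ hj1, hulabel ▸ hj2⟩, huval⟩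
          · exact hvval t ht
    · rintro t ⟨hsize, ⟨hlab, hval⟩, hlabel⟩
      cases t with
      | node b ts =>
        have hb : b = i := hlabel
        subst hb
        cases ts with
        | nil =>
          exfalso; rw [size_node] at hsize; simp at hsize
        | cons u rest =>
          rw [size_cons] at hsize
          rw [labelsLe_node] at hlab
          rw [valid_node] at hval
          have hu1 := size_pos u
          have hv1 := size_pos (node b rest)
          have hcell := (hval u (List.mem_cons_self)).1
          refine ⟨(u, node b rest), ?_, rfl⟩
          simp only [Set.mem_iUnion, Finset.mem_coe, Finset.mem_product, Finset.mem_range,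
            Finset.mem_Icc, exists_prop, Set.mem_prod]
          refine ⟨(u.size - 1, u.label), ⟨⟨by omega, hcell.2.1, hcell.2.2⟩, ?_, ?_⟩⟩
          · exact ⟨by omega, ⟨hlab.2 u (List.mem_cons_self),
              (hval u (List.mem_cons_self)).2⟩, rfl⟩
          · refine ⟨by omega, ⟨?_, ?_⟩, rfl⟩
            · rw [labelsLe_node]
              exact ⟨hlab.1, fun t ht => hlab.2 t (List.mem_cons_of_mem _ ht)⟩
            · rw [valid_node]
              exact fun t ht => hval t (List.mem_cons_of_mem _ ht)
  rw [← himg, Set.ncard_image_of_injective _ graft_injective,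
    ncard_finset_biUnion _ _
      (fun p _ => ((TS_finite L l p.2 p.1).prod (TS_finite L l i (k - p.1)))) ?hd,
    Finset.sum_product]
  · exact Finset.sum_congr rfl fun s _ => Finset.sum_congr rfl fun j' _ => ncard_sprod _ _
  case hd =>
    rintro ⟨s, j'⟩ hp ⟨s', j''⟩ hp' hne
    rw [Set.disjoint_left]
    rintro ⟨u, v⟩ ⟨hu, -⟩ ⟨hu', -⟩
    apply hne
    obtain ⟨h1, -, h3⟩ := hu
    obtain ⟨h2, -, h4⟩ := hu'
    dsimp only at h1 h2 h3 h4
    simp only [Prod.mk.injEq]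
    omega

/-- The generating functions `H_j` of `λ`-plane trees rooted at a label of block `j`
satisfy `H_j = z + H_j · (a₁ H₁ + ⋯ + a_{r-j+1} H_{r-j+1})`. -/
theorem stmt15 (r : ℕ) (hr : 1 ≤ r) (a : ℕ → ℕ)
    (ha : ∀ n, 1 ≤ n → n ≤ r → 1 ≤ a n)
    (l : ℕ) (hl : l = ∑ m ∈ Finset.Icc 1 r, a m)
    (L f : ℕ → ℕ)
    (hL : ∀ n i, 1 ≤ n → n ≤ r → (∑ m ∈ Finset.Icc 1 (n - 1), a m) < i →
        i ≤ ∑ m ∈ Finset.Icc 1 n, a m → L i = ∑ m ∈ Finset.Icc 1 (r - n + 1), a m)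
    (hL0 : ∀ i, l < i → L i = 0)
    (hf : ∀ i, 1 ≤ i → i ≤ l →
        (∑ m ∈ Finset.Icc 1 (f i - 1), a m) < i ∧ i ≤ ∑ m ∈ Finset.Icc 1 (f i), a m)
    (H : ℕ → PowerSeries ℚ)
    (hH0 : ∀ j, PowerSeries.coeff (R := ℚ) 0 (H j) = 0)
    (hHcoeff : ∀ i, 1 ≤ i → i ≤ l → ∀ n : ℕ,
        PowerSeries.coeff (R := ℚ) (n + 1) (H (f i)) =
          (Nat.card {t : LTree // t.size = n + 1 ∧ IsLambdaPlaneTree L l t ∧ t.label = i} : ℚ)) :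
    ∀ j, 1 ≤ j → j ≤ r →
      H j = PowerSeries.X +
        H j * ∑ m ∈ Finset.Icc 1 (r - j + 1), PowerSeries.C (R := ℚ) ((a m : ℚ)) * H m := by
  set Sm : ℕ → ℕ := fun m => ∑ m' ∈ Finset.Icc 1 m, a m' with hSm
  have hmono : ∀ {m m' : ℕ}, m ≤ m' → Sm m ≤ Sm m' := by
    intro m m' h
    exact Finset.sum_le_sum_of_subset (Finset.Icc_subset_Icc_right h)
  have hstep : ∀ m, 1 ≤ m → Sm m = Sm (m - 1) + a m := by
    intro m hm
    obtain ⟨m, rfl⟩ := Nat.exists_eq_add_of_le hm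
    have := Finset.sum_Icc_succ_top (by omega : 1 ≤ m + 1) a
    simpa [hSm, Nat.add_comm 1 m] using this
  have hS0 : Sm 0 = 0 := by simp [hSm]
  have hSr : Sm r = l := hl.symm
  have hfu : ∀ i₀ m, 1 ≤ i₀ → i₀ ≤ l → 1 ≤ m → m ≤ r → Sm (m - 1) < i₀ → i₀ ≤ Sm m →
      f i₀ = m := by
    intro i₀ m h1 h2 hm1 hm2 hlt hle
    obtain ⟨hf1, hf2⟩ := hf i₀ h1 h2
    have hSm' : ∀ x, (∑ m' ∈ Finset.Icc 1 x, a m') = Sm x := fun _ => rfl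
    rw [hSm'] at hf1 hf2
    rcases Nat.lt_trichotomy (f i₀) m with h | h | h
    · exfalso
      have : Sm (f i₀) ≤ Sm (m - 1) := hmono (by omega)
      omega
    · exact h
    · exfalso
      have : Sm m ≤ Sm (f i₀ - 1) := hmono (by omega)
      omega
  have hIocIcc : ∀ x : ℕ, Finset.Ioc 0 x = Finset.Icc 1 x := by
    intro x; ext y; simp only [Finset.mem_Ioc, Finset.mem_Icc]; omega
  set K : ℕ → ℕ → ℕ := fun i n => (TS L l i n).ncard with hK
  have hcard : ∀ i n, 1 ≤ i → i ≤ l →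
      PowerSeries.coeff (R := ℚ) (n + 1) (H (f i)) = (K i n : ℚ) := by
    intro i n h1 h2
    rw [hHcoeff i h1 h2 n]
    norm_cast
  have hK0 : ∀ i, 1 ≤ i → i ≤ l → K i 0 = 1 := by
    intro i h1 h2
    show (TS L l i 0).ncard = 1
    rw [TS_zero L l i h1 h2, Set.ncard_singleton]
  have hKrec : ∀ i k, 1 ≤ i → i ≤ l →
      K i (k + 1) = ∑ s ∈ Finset.range (k + 1), ∑ j' ∈ Finset.Icc 1 (L i),
        K j' s * K i (k - s) := fun i k h1 h2 => TS_succ L l i k h1 h2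
  have hblocks : ∀ (F : ℕ → ℚ) (q : ℕ), q ≤ r →
      ∑ j' ∈ Finset.Ioc 0 (Sm q), F j' =
        ∑ m ∈ Finset.Icc 1 q, ∑ j' ∈ Finset.Ioc (Sm (m - 1)) (Sm m), F j' := by
    intro F q
    induction q with
    | zero => intro _; simp [hS0]
    | succ q ih =>
      intro hq
      rw [← Finset.sum_Ioc_consecutive F (Nat.zero_le (Sm q)) (hmono (Nat.le_succ q)),
        ih (by omega), Finset.sum_Icc_succ_top (by omega : 1 ≤ q + 1)]
      rfl
  intro j hj1 hjr
  set q : ℕ := r - j + 1 with hqdef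
  have hq1 : 1 ≤ q := by omega
  have hqr : q ≤ r := by omega
  set i0 : ℕ := Sm j with hi0
  have hi01 : 1 ≤ i0 := by have := hstep j hj1; have := ha j hj1 hjr; omega
  have hi0l : i0 ≤ l := hSr ▸ hmono hjr
  have hfi0 : f i0 = j :=
    hfu i0 j hi01 hi0l hj1 hjr (by have := hstep j hj1; have := ha j hj1 hjr; omega) le_rfl
  have hSm' : ∀ x, (∑ m' ∈ Finset.Icc 1 x, a m') = Sm x := fun _ => rfl
  have hLi0 : L i0 = Sm q := by
    have := hL j i0 hj1 hjr ?_ le_rfl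
    · rw [this, hSm']
    · rw [hSm']
      have := hstep j hj1
      have := ha j hj1 hjr
      omega
  set G : PowerSeries ℚ := ∑ m ∈ Finset.Icc 1 q, PowerSeries.C (R := ℚ) ((a m : ℚ)) * H m with hG
  have cG0 : PowerSeries.coeff (R := ℚ) 0 G = 0 := by
    rw [hG, map_sum]
    refine Finset.sum_eq_zero fun m _ => ?_
    rw [PowerSeries.coeff_C_mul, hH0, mul_zero]
  have cGs : ∀ s : ℕ, PowerSeries.coeff (R := ℚ) (s + 1) G =
      ∑ j' ∈ Finset.Icc 1 (Sm q), (K j' s : ℚ) := by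
    intro s
    rw [hG, map_sum, ← hIocIcc (Sm q), hblocks (fun j' => (K j' s : ℚ)) q hqr]
    refine Finset.sum_congr rfl fun m hm => ?_
    rw [Finset.mem_Icc] at hm
    have hm1 := hm.1
    have hmr : m ≤ r := le_trans hm.2 hqr
    rw [PowerSeries.coeff_C_mul]
    have hconst : ∀ j' ∈ Finset.Ioc (Sm (m - 1)) (Sm m),
        (K j' s : ℚ) = PowerSeries.coeff (R := ℚ) (s + 1) (H m) := by
      intro j' hj'
      rw [Finset.mem_Ioc] at hj'
      have hj'1 : 1 ≤ j' := by omega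
      have hj'l : j' ≤ l := le_trans hj'.2 (hSr ▸ hmono hmr)
      have hfj' : f j' = m := hfu j' m hj'1 hj'l hm1 hmr hj'.1 hj'.2
      rw [← hfj', hcard j' s hj'1 hj'l]
    rw [Finset.sum_congr rfl hconst, Finset.sum_const, Nat.card_Ioc]
    have h1 := hstep m hm1
    have h2 : Sm m - Sm (m - 1) = a m := by omega
    rw [h2, nsmul_eq_mul]
  have cHj : ∀ n : ℕ, PowerSeries.coeff (R := ℚ) (n + 1) (H j) = (K i0 n : ℚ) := by
    intro n
    rw [← hfi0]
    exact hcard i0 n hi01 hi0l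
  refine PowerSeries.ext fun n => ?_
  rw [map_add]
  cases n with
  | zero =>
    simp [PowerSeries.coeff_mul, hH0]
  | succ n =>
    cases n with
    | zero =>
      rw [cHj 0, hK0 i0 hi01 hi0l, PowerSeries.coeff_mul,
        Finset.Nat.sum_antidiagonal_eq_sum_range_succ_mk,
        Finset.sum_range_succ, Finset.sum_range_one]
      dsimp only
      rw [hH0, cG0]
      simp
    | succ k =>
      have hmul : PowerSeries.coeff (R := ℚ) (k + 1 + 1) (H j * G) =
          ∑ u ∈ Finset.range (k + 1),
            (K i0 u : ℚ) * ∑ j' ∈ Finset.Icc 1 (Sm q), (K j' (k - u) : ℚ) := by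
        rw [PowerSeries.coeff_mul, Finset.Nat.sum_antidiagonal_eq_sum_range_succ_mk,
          Finset.sum_range_succ, Finset.sum_range_succ']
        dsimp only
        rw [Nat.sub_self, cG0, mul_zero, add_zero, hH0, zero_mul, add_zero]
        refine Finset.sum_congr rfl fun u hu => ?_
        rw [Finset.mem_range] at hu
        have e3 : k + 1 + 1 - (u + 1) = (k - u) + 1 := by omega
        rw [e3, cHj u, cGs (k - u)]
      rw [hmul, cHj (k + 1), hKrec i0 k hi01 hi0l, hLi0]
      have e2 : PowerSeries.coeff (R := ℚ) (k + 1 + 1) PowerSeries.X = 0 := by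
        rw [PowerSeries.coeff_X]
        simp
      rw [e2, zero_add]
      push_cast
      rw [← Finset.sum_range_reflect
        (fun u => (K i0 u : ℚ) * ∑ j' ∈ Finset.Icc 1 (Sm q), (K j' (k - u) : ℚ)) (k + 1)]
      refine Finset.sum_congr rfl fun s hs => ?_
      rw [Finset.mem_range] at hs
      have e4 : k + 1 - 1 - s = k - s := by omega
      have e5 : k - (k - s) = s := by omega
      simp only [e4, e5, Finset.mul_sum]
      exact Finset.sum_congr rfl fun j' _ => mul_comm _ _
end

section
/- Let λ be the fat hook ((a_1+a_2)^{a_1}, a_1^{a_2}) of length ℓ = a_1 + a_2, and let M(z) = Σ_{k≥0} C_k^λ z^{k+1} be the generating function of the counts of λ-plane trees. Then M satisfies the cubic equation M³ + ((a_1 − a_2)z − 2)M² + (1 + 2a_2 z)M − z(ℓ − a_1² z) = 0 as formal power series. -/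
namespace PT

open LTree

lemma size_node (a : ℕ) (ts : List LTree) :
    (LTree.node a ts).size = 1 + (ts.map size).sum := by
  rw [size, List.attach_map_val]

lemma valid_node (P : ℕ → ℕ → Prop) (a : ℕ) (ts : List LTree) :
    Valid P (LTree.node a ts) ↔ ∀ t ∈ ts, P a t.label ∧ Valid P t := by
  rw [Valid]

lemma labelsLe_node (l a : ℕ) (ts : List LTree) :
    LabelsLe l (LTree.node a ts) ↔ ((1 ≤ a ∧ a ≤ l) ∧ ∀ t ∈ ts, LabelsLe l t) := by
  rw [LabelsLe]

lemma one_le_size (t : LTree) : 1 ≤ t.size := by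
  cases t with
  | node a ts => rw [size_node]; omega

def Good (l : ℕ) (P : ℕ → ℕ → Prop) (t : LTree) : Prop :=
  LTree.LabelsLe l t ∧ LTree.Valid P t

lemma good_node (l : ℕ) (P : ℕ → ℕ → Prop) (a : ℕ) (ts : List LTree) :
    Good l P (LTree.node a ts) ↔
      (1 ≤ a ∧ a ≤ l) ∧ ∀ t ∈ ts, P a t.label ∧ Good l P t := by
  unfold Good
  rw [valid_node, labelsLe_node]
  constructor
  · rintro ⟨⟨h1, h2⟩, h3⟩
    exact ⟨h1, fun t ht => ⟨(h3 t ht).1, h2 t ht, (h3 t ht).2⟩⟩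
  · rintro ⟨h1, h2⟩
    exact ⟨⟨h1, fun t ht => (h2 t ht).2.1⟩, fun t ht => ⟨(h2 t ht).1, (h2 t ht).2.2⟩⟩

lemma good_label_le {l : ℕ} {P : ℕ → ℕ → Prop} {t : LTree} (h : Good l P t) :
    1 ≤ t.label ∧ t.label ≤ l := by
  cases t with
  | node a ts => exact ((good_node l P a ts).1 h).1

/-- Finiteness of trees with bounded size and labels. -/
lemma finite_size_le (l n : ℕ) : {t : LTree | t.LabelsLe l ∧ t.size ≤ n}.Finite := by
  induction n with
  | zero =>
    convert Set.finite_empty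
    ext t
    have := one_le_size t
    simp only [Set.mem_setOf_eq, Set.mem_empty_iff_false, iff_false]
    rintro ⟨-, h⟩; omega
  | succ n ih =>
    have hlist : {ts : List LTree |
        (∀ t ∈ ts, t ∈ {t : LTree | t.LabelsLe l ∧ t.size ≤ n}) ∧ ts.length ≤ n}.Finite := by
      haveI : Finite {t : LTree | t.LabelsLe l ∧ t.size ≤ n} := ih
      have h2 := List.finite_length_le {t : LTree | t.LabelsLe l ∧ t.size ≤ n} n
      have := (h2.image (fun ts => ts.map Subtype.val))
      apply this.subset
      rintro ts ⟨h1, h2⟩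
      refine ⟨ts.attach.map (fun t => ⟨t.1, h1 t.1 t.2⟩), by simpa using h2, ?_⟩
      simp [List.map_map]
    have := ((Set.finite_Icc 1 l).prod hlist).image
      (fun p : ℕ × List LTree => LTree.node p.1 p.2)
    apply this.subset
    rintro t ⟨hlab, hsize⟩
    cases t with
    | node a ts =>
      rw [labelsLe_node] at hlab
      rw [size_node] at hsize
      refine ⟨(a, ts), ⟨⟨hlab.1.1, hlab.1.2⟩, ?_, ?_⟩, rfl⟩
      · intro t ht
        refine ⟨hlab.2 t ht, ?_⟩
        have h1 : t.size ≤ (ts.map size).sum := List.le_sum_of_mem (List.mem_map_of_mem ht)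
        omega
      · show ts.length ≤ n
        have h2 : ts.length ≤ (ts.map size).sum := by
          calc ts.length = (ts.map (fun _ => 1)).sum := by simp
          _ ≤ (ts.map size).sum := by
            apply List.sum_le_sum
            intro t ht
            exact one_le_size t
        omega

instance fin_inst (l : ℕ) (P : ℕ → ℕ → Prop) (a n : ℕ) :
    Finite {t : LTree // t.size = n ∧ t.label = a ∧ Good l P t} := by
  apply Set.Finite.to_subtype (s := {t : LTree | t.size = n ∧ t.label = a ∧ Good l P t})
  apply (finite_size_le l n).subset
  rintro t ⟨h1, -, h3, -⟩
  exact ⟨h3, h1.le⟩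

instance fin_inst2 (l : ℕ) (P : ℕ → ℕ → Prop) (a n : ℕ) :
    Finite {t : LTree // t.size = n ∧ Good l P t ∧ P a t.label} := by
  apply Set.Finite.to_subtype (s := {t : LTree | t.size = n ∧ Good l P t ∧ P a t.label})
  apply (finite_size_le l n).subset
  rintro t ⟨h1, ⟨h2, -⟩, -⟩
  exact ⟨h2, h1.le⟩

noncomputable def cnt (l : ℕ) (P : ℕ → ℕ → Prop) (a n : ℕ) : ℕ :=
  Nat.card {t : LTree // t.size = n ∧ t.label = a ∧ Good l P t}

lemma cnt_zero (l : ℕ) (P : ℕ → ℕ → Prop) (a : ℕ) : cnt l P a 0 = 0 := by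
  have : IsEmpty {t : LTree // t.size = 0 ∧ t.label = a ∧ Good l P t} := by
    constructor
    rintro ⟨t, h1, -⟩
    have := one_le_size t
    omega
  exact Nat.card_of_isEmpty

lemma cnt_one (l : ℕ) (P : ℕ → ℕ → Prop) (a : ℕ) (h1 : 1 ≤ a) (h2 : a ≤ l) :
    cnt l P a 1 = 1 := by
  rw [cnt, Nat.card_eq_one_iff_unique]
  refine ⟨⟨?_⟩, ?_⟩
  · rintro ⟨t, ht⟩ ⟨s, hs⟩
    have key : ∀ u : LTree, u.size = 1 ∧ u.label = a ∧ Good l P u → u = LTree.node a [] := by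
      rintro ⟨b, ts⟩ ⟨hu1, hu2, -⟩
      have : ts = [] := by
        cases ts with
        | nil => rfl
        | cons c rest =>
          rw [size_node] at hu1
          have := one_le_size c
          simp [List.sum_cons] at hu1
          omega
      subst this
      simp [LTree.label] at hu2
      rw [hu2]
    simp [key t ht, key s hs]
  · refine ⟨⟨LTree.node a [], ?_, ?_, ?_⟩⟩
    · simp [size_node]
    · rfl
    · rw [good_node]; exact ⟨⟨h1, h2⟩, by simp⟩

def children : LTree → List LTree
  | .node _ ts => ts

lemma node_label_children (t : LTree) : LTree.node t.label (children t) = t := by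
  cases t; rfl

lemma size_eq_children (t : LTree) : t.size = 1 + ((children t).map size).sum := by
  cases t with
  | node a ts => rw [size_node]; rfl

variable (l : ℕ) (P : ℕ → ℕ → Prop)

/-- Root decomposition. -/
noncomputable def decompEquiv (a n : ℕ) :
    {t : LTree // t.size = n + 2 ∧ t.label = a ∧ Good l P t} ≃
    Σ m : Fin (n + 1), {t : LTree // t.size = m + 1 ∧ Good l P t ∧ P a t.label} ×
      {t : LTree // t.size = n + 1 - m ∧ t.label = a ∧ Good l P t} where
  toFun := fun ⟨t, h⟩ =>
    match t, h with
    | .node a' (c :: rest), h => by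
      rw [size_node, List.map_cons, List.sum_cons] at h
      have hlab : a' = a := h.2.1
      have hg := (good_node l P a' (c :: rest)).1 h.2.2
      have hc1 := one_le_size c
      have hsz := h.1
      have hrest1 : ∀ t ∈ rest, 1 ≤ t.size := fun t _ => one_le_size t
      have hrsum : rest.length ≤ (rest.map size).sum := by
        calc rest.length = (rest.map (fun _ => 1)).sum := by simp
        _ ≤ (rest.map size).sum := List.sum_le_sum (fun t ht => one_le_size t)
      refine ⟨⟨c.size - 1, by omega⟩, ⟨c, by simp; omega, ?_, ?_⟩,
        ⟨.node a rest, ?_, rfl, ?_⟩⟩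
      · exact (hg.2 c List.mem_cons_self).2
      · rw [← hlab]; exact (hg.2 c List.mem_cons_self).1
      · rw [size_node]; simp; omega
      · rw [good_node]
        exact ⟨hlab ▸ hg.1, fun t ht => hlab ▸ hg.2 t (List.mem_cons_of_mem _ ht)⟩
    | .node a' [], h => by
      exfalso
      have hs := h.1
      rw [size_node] at hs
      simp at hs
  invFun := fun ⟨⟨m, hm⟩, ⟨c, hc⟩, ⟨t2, h2⟩⟩ =>
    ⟨.node a (c :: children t2), by
      have ht2 : LTree.node a (children t2) = t2 := by
        rw [← h2.2.1]; exact node_label_children t2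
      have hgood := (good_node l P a (children t2)).1 (ht2 ▸ h2.2.2)
      have hsz2 := size_eq_children t2
      have h2s := h2.1
      have hcs := hc.1
      refine ⟨?_, rfl, ?_⟩
      · rw [size_node, List.map_cons, List.sum_cons]
        omega
      · rw [good_node]
        refine ⟨hgood.1, ?_⟩
        intro t ht
        rcases List.mem_cons.mp ht with h | h
        · subst h; exact ⟨hc.2.2, hc.2.1⟩
        · exact hgood.2 t h⟩
  left_inv := by
    rintro ⟨t, h⟩
    match t, h with
    | .node a' (c :: rest), h =>
      have hlab : a' = a := h.2.1
      subst hlab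
      rfl
    | .node a' [], h =>
      exfalso
      have hs := h.1
      rw [size_node] at hs
      simp at hs
  right_inv := by
    rintro ⟨⟨m, hm⟩, ⟨c, hc⟩, ⟨t2, h2⟩⟩
    cases t2 with
    | node b ch =>
      have hb : b = a := h2.2.1
      subst hb
      have hcs : c.size = m + 1 := hc.1
      obtain rfl : m = c.size - 1 := by omega
      rfl

open scoped Classical in
lemma nat_card_sigma {ι : Type*} [Fintype ι] (f : ι → Type*) [∀ i, Finite (f i)] :
    Nat.card (Sigma f) = ∑ i, Nat.card (f i) := by
  letI := fun i => Fintype.ofFinite (f i)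
  simp [Nat.card_eq_fintype_card, Fintype.card_sigma]

/-- Partition trees by root label. -/
noncomputable def labelEquiv (n : ℕ) (Q : LTree → Prop) (hQ : ∀ t, Q t → t.label ≤ l) :
    {t : LTree // t.size = n ∧ Q t} ≃
      Σ b : Fin (l + 1), {t : LTree // t.size = n ∧ t.label = b ∧ Q t} where
  toFun := fun ⟨t, h⟩ => ⟨⟨t.label, Nat.lt_succ_of_le (hQ t h.2)⟩, ⟨t, h.1, rfl, h.2⟩⟩
  invFun := fun ⟨b, ⟨t, h⟩⟩ => ⟨t, h.1, h.2.2⟩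
  left_inv := by rintro ⟨t, h⟩; rfl
  right_inv := by
    rintro ⟨⟨b, hb⟩, ⟨t, h⟩⟩
    obtain rfl : b = t.label := h.2.1.symm
    rfl

open scoped Classical in
lemma childcnt (a n : ℕ) :
    Nat.card {t : LTree // t.size = n ∧ Good l P t ∧ P a t.label} =
      ∑ b ∈ Finset.range (l + 1), if P a b then cnt l P b n else 0 := by
  haveI : ∀ b : Fin (l + 1), Finite
      {t : LTree // t.size = n ∧ t.label = ↑b ∧ Good l P t ∧ P a t.label} := by
    intro b
    apply Set.Finite.to_subtype
      (s := {t : LTree | t.size = n ∧ t.label = ↑b ∧ Good l P t ∧ P a t.label})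
    apply (finite_size_le l n).subset
    rintro t ⟨ht1, -, ht3, -⟩
    exact ⟨ht3.1, ht1.le⟩
  rw [Nat.card_congr (labelEquiv l n (fun t => Good l P t ∧ P a t.label)
    (fun t ht => (good_label_le ht.1).2))]
  rw [nat_card_sigma, Fin.sum_univ_eq_sum_range
    (fun b => Nat.card {t : LTree // t.size = n ∧ t.label = b ∧ Good l P t ∧ P a t.label})]
  apply Finset.sum_congr rfl
  intro b _
  by_cases hb : P a b
  · rw [if_pos hb, cnt]
    apply Nat.card_congr
    apply Equiv.subtypeEquivRight
    intro t
    constructor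
    · rintro ⟨h1, h2, h3, -⟩; exact ⟨h1, h2, h3⟩
    · rintro ⟨h1, h2, h3⟩; exact ⟨h1, h2, h3, h2 ▸ hb⟩
  · rw [if_neg hb]
    have : IsEmpty {t : LTree // t.size = n ∧ t.label = b ∧ Good l P t ∧ P a t.label} := by
      constructor
      rintro ⟨t, -, h2, -, h4⟩
      exact hb (h2 ▸ h4)
    exact Nat.card_of_isEmpty

open scoped Classical in
lemma cnt_rec (a n : ℕ) :
    cnt l P a (n + 2) =
      ∑ m ∈ Finset.range (n + 1),
        (∑ b ∈ Finset.range (l + 1), if P a b then cnt l P b (m + 1) else 0) *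
          cnt l P a (n + 1 - m) := by
  rw [cnt, Nat.card_congr (decompEquiv l P a n), nat_card_sigma,
    Fin.sum_univ_eq_sum_range (fun m => Nat.card
      ({t : LTree // t.size = m + 1 ∧ Good l P t ∧ P a t.label} ×
        {t : LTree // t.size = n + 1 - m ∧ t.label = a ∧ Good l P t}))]
  apply Finset.sum_congr rfl
  intro m _
  rw [Nat.card_prod, childcnt]
  rfl

def relabel (f : ℕ → ℕ) : LTree → LTree
  | .node a ts => .node (f a) (ts.attach.map (fun t => relabel f t.1))
decreasing_by
  have := List.sizeOf_lt_of_mem t.2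
  simp only [LTree.node.sizeOf_spec]
  omega

lemma relabel_node (f : ℕ → ℕ) (a : ℕ) (ts : List LTree) :
    relabel f (.node a ts) = .node (f a) (ts.map (relabel f)) := by
  rw [relabel, List.attach_map_val]

lemma strongInd {motive : LTree → Prop}
    (h : ∀ a ts, (∀ t ∈ ts, motive t) → motive (.node a ts)) : ∀ t, motive t
  | .node a ts => h a ts (fun t ht => strongInd h t)
decreasing_by
  have := List.sizeOf_lt_of_mem ht
  simp only [LTree.node.sizeOf_spec]
  omega

lemma size_relabel (f : ℕ → ℕ) (t : LTree) : (relabel f t).size = t.size := by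
  induction t using strongInd with
  | h a ts ih =>
    rw [relabel_node, size_node, size_node, List.map_map]
    congr 1
    exact congrArg List.sum (List.map_congr_left (fun t ht => ih t ht))

lemma label_relabel (f : ℕ → ℕ) (t : LTree) : (relabel f t).label = f t.label := by
  cases t with
  | node a ts => rw [relabel_node]; rfl

lemma relabel_invol {f : ℕ → ℕ} (hf : ∀ x, f (f x) = x) (t : LTree) :
    relabel f (relabel f t) = t := by
  induction t using strongInd with
  | h a ts ih =>
    rw [relabel_node, relabel_node, List.map_map, hf]
    have h2 : List.map (relabel f ∘ relabel f) ts = List.map id ts :=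
      List.map_congr_left (fun t ht => ih t ht)
    rw [h2, List.map_id]

lemma good_relabel (l : ℕ) (P : ℕ → ℕ → Prop) (f : ℕ → ℕ)
    (hf1 : ∀ x, 1 ≤ x → x ≤ l → 1 ≤ f x ∧ f x ≤ l)
    (hf2 : ∀ u v, 1 ≤ u → u ≤ l → 1 ≤ v → v ≤ l → P u v → P (f u) (f v))
    (t : LTree) (ht : Good l P t) : Good l P (relabel f t) := by
  induction t using strongInd with
  | h a ts ih =>
    rw [good_node] at ht
    rw [relabel_node, good_node]
    refine ⟨hf1 a ht.1.1 ht.1.2, ?_⟩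
    intro t' ht'
    rw [List.mem_map] at ht'
    obtain ⟨t, htm, rfl⟩ := ht'
    have h3 := ht.2 t htm
    refine ⟨?_, ih t htm h3.2⟩
    rw [label_relabel]
    exact hf2 a t.label ht.1.1 ht.1.2 (good_label_le h3.2).1 (good_label_le h3.2).2 h3.1

lemma cnt_relabel (l : ℕ) (P : ℕ → ℕ → Prop) (f : ℕ → ℕ)
    (hf : ∀ x, f (f x) = x)
    (hf1 : ∀ x, 1 ≤ x → x ≤ l → 1 ≤ f x ∧ f x ≤ l)
    (hf2 : ∀ u v, 1 ≤ u → u ≤ l → 1 ≤ v → v ≤ l → P u v → P (f u) (f v))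
    (a n : ℕ) : cnt l P a n = cnt l P (f a) n := by
  apply Nat.card_congr
  refine ⟨fun ⟨t, h⟩ => ⟨relabel f t, ?_, ?_, ?_⟩,
          fun ⟨t, h⟩ => ⟨relabel f t, ?_, ?_, ?_⟩, ?_, ?_⟩
  · rw [size_relabel]; exact h.1
  · rw [label_relabel, h.2.1]
  · exact good_relabel l P f hf1 hf2 t h.2.2
  · rw [size_relabel]; exact h.1
  · rw [label_relabel, h.2.1, hf]
  · exact good_relabel l P f hf1 hf2 t h.2.2
  · rintro ⟨t, h⟩; simp [relabel_invol hf]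
  · rintro ⟨t, h⟩; simp [relabel_invol hf]

lemma cnt_label_zero (l : ℕ) (P : ℕ → ℕ → Prop) (n : ℕ) : cnt l P 0 n = 0 := by
  have : IsEmpty {t : LTree // t.size = n ∧ t.label = 0 ∧ Good l P t} := by
    constructor
    rintro ⟨t, -, h2, h3⟩
    have := good_label_le h3
    omega
  exact Nat.card_of_isEmpty

lemma total_cnt (l : ℕ) (P : ℕ → ℕ → Prop) (n : ℕ) :
    Nat.card {t : LTree // t.size = n ∧ Good l P t} =
      ∑ b ∈ Finset.range (l + 1), cnt l P b n := by
  haveI : ∀ b : Fin (l + 1), Finite {t : LTree // t.size = n ∧ t.label = ↑b ∧ Good l P t} :=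
    fun b => fin_inst l P b n
  rw [Nat.card_congr (labelEquiv l n (Good l P) (fun t ht => (good_label_le ht).2)),
    nat_card_sigma, Fin.sum_univ_eq_sum_range
      (fun b => Nat.card {t : LTree // t.size = n ∧ t.label = b ∧ Good l P t})]
  rfl

section FatHook

variable (a1 a2 : ℕ) (L : ℕ → ℕ)
variable (ha1 : 1 ≤ a1) (ha2 : 1 ≤ a2)
variable (hL : ∀ i, L i = if 1 ≤ i ∧ i ≤ a1 then a1 + a2 else if i ≤ a1 + a2 then a1 else 0)

/-- swap function -/
def swapf (b c x : ℕ) : ℕ := if x = b then c else if x = c then b else x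

include hL in
lemma cellMem_iff (u v : ℕ) :
    cellMem L u v ↔ 1 ≤ u ∧ 1 ≤ v ∧ u ≤ a1 + a2 ∧ (v ≤ a1 + a2) ∧ (a1 < u → v ≤ a1) := by
  unfold cellMem
  rw [hL u]
  split_ifs with h h' <;> omega

include ha1 ha2 hL in
lemma cnt_class (b c : ℕ) (hb : 1 ≤ b ∧ b ≤ a1 + a2) (hc : 1 ≤ c ∧ c ≤ a1 + a2)
    (hclass : b ≤ a1 ↔ c ≤ a1) (n : ℕ) :
    cnt (a1 + a2) (fun u v => cellMem L u v) b n =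
      cnt (a1 + a2) (fun u v => cellMem L u v) c n := by
  have key : ∀ x, swapf b c (swapf b c x) = x := by
    intro x
    unfold swapf
    split_ifs <;> omega
  have hcl : ∀ x, (swapf b c x ≤ a1 ↔ x ≤ a1) ∧ (1 ≤ x → x ≤ a1 + a2 → 1 ≤ swapf b c x ∧ swapf b c x ≤ a1 + a2) := by
    intro x
    unfold swapf
    split_ifs <;> omega
  have := cnt_relabel (a1 + a2) (fun u v => cellMem L u v) (swapf b c) key
    (fun x h1 h2 => (hcl x).2 h1 h2)
    (fun u v hu1 hu2 hv1 hv2 hP => by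
      change cellMem L u v at hP
      change cellMem L (swapf b c u) (swapf b c v)
      rw [cellMem_iff a1 a2 L hL] at hP ⊢
      have h1 := (hcl u).1
      have h2 := (hcl v).1
      have h3 := (hcl u).2 hu1 hu2
      have h4 := (hcl v).2 hv1 hv2
      omega) b n
  rw [this]
  have : swapf b c b = c := by unfold swapf; split_ifs <;> omega
  rw [this]

include ha1 ha2 hL in
lemma sum_cnt (n : ℕ) :
    ∑ b ∈ Finset.range (a1 + a2 + 1), cnt (a1 + a2) (fun u v => cellMem L u v) b n =
      a1 * cnt (a1 + a2) (fun u v => cellMem L u v) 1 n +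
        a2 * cnt (a1 + a2) (fun u v => cellMem L u v) (a1 + a2) n := by
  set P : ℕ → ℕ → Prop := fun u v => cellMem L u v with hP
  set l := a1 + a2 with hl
  rw [Finset.range_eq_Ico]
  rw [← Finset.sum_Ico_consecutive (fun b => cnt l P b n) (Nat.zero_le (a1 + 1)) (by omega)]
  rw [← Finset.sum_Ico_consecutive (fun b => cnt l P b n) (Nat.zero_le 1) (by omega)]
  have e0 : ∑ b ∈ Finset.Ico 0 1, cnt l P b n = 0 := by
    simp [cnt_label_zero]
  have e1 : ∑ b ∈ Finset.Ico 1 (a1 + 1), cnt l P b n = a1 * cnt l P 1 n := by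
    rw [Finset.sum_congr rfl (g := fun _ => cnt l P 1 n) (fun b hb => by
      rw [Finset.mem_Ico] at hb
      exact cnt_class a1 a2 L ha1 ha2 hL b 1 ⟨hb.1, by omega⟩ ⟨le_refl 1, by omega⟩ (by omega) n)]
    rw [Finset.sum_const, Nat.card_Ico]
    simp [mul_comm]
  have e2 : ∑ b ∈ Finset.Ico (a1 + 1) (l + 1), cnt l P b n = a2 * cnt l P l n := by
    rw [Finset.sum_congr rfl (g := fun _ => cnt l P l n) (fun b hb => by
      rw [Finset.mem_Ico] at hb
      exact cnt_class a1 a2 L ha1 ha2 hL b l ⟨by omega, by omega⟩ ⟨by omega, le_refl l⟩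
        (by omega) n)]
    rw [Finset.sum_const, Nat.card_Ico]
    have : l + 1 - (a1 + 1) = a2 := by omega
    rw [this, smul_eq_mul]
  rw [e0, e1, e2]
  omega

open scoped Classical in
include ha1 ha2 hL in
lemma childsum_small (n : ℕ) :
    (∑ b ∈ Finset.range (a1 + a2 + 1),
      if (fun u v => cellMem L u v) 1 b then cnt (a1 + a2) (fun u v => cellMem L u v) b n else 0) =
      a1 * cnt (a1 + a2) (fun u v => cellMem L u v) 1 n +
        a2 * cnt (a1 + a2) (fun u v => cellMem L u v) (a1 + a2) n := by
  rw [← sum_cnt a1 a2 L ha1 ha2 hL n]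
  apply Finset.sum_congr rfl
  intro b hb
  rw [Finset.mem_range] at hb
  by_cases h : cellMem L 1 b
  · rw [if_pos h]
  · rw [if_neg h]
    have hb0 : b = 0 := by
      by_contra hb0
      apply h
      rw [cellMem_iff a1 a2 L hL]
      omega
    rw [hb0, cnt_label_zero]

open scoped Classical in
include ha1 ha2 hL in
lemma childsum_big (n : ℕ) :
    (∑ b ∈ Finset.range (a1 + a2 + 1),
      if (fun u v => cellMem L u v) (a1 + a2) b
        then cnt (a1 + a2) (fun u v => cellMem L u v) b n else 0) =
      a1 * cnt (a1 + a2) (fun u v => cellMem L u v) 1 n := by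
  set P : ℕ → ℕ → Prop := fun u v => cellMem L u v with hPdef
  set l := a1 + a2 with hl
  have hcond : ∀ b, P l b ↔ (1 ≤ b ∧ b ≤ a1) := by
    intro b
    change cellMem L l b ↔ _
    rw [cellMem_iff a1 a2 L hL]
    omega
  rw [Finset.range_eq_Ico]
  rw [← Finset.sum_Ico_consecutive (fun b => if P l b then cnt l P b n else 0)
    (Nat.zero_le (a1 + 1)) (by omega)]
  have e1 : ∑ b ∈ Finset.Ico 0 (a1 + 1), (if P l b then cnt l P b n else 0) =
      a1 * cnt l P 1 n := by
    rw [← Finset.sum_Ico_consecutive (fun b => if P l b then cnt l P b n else 0)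
      (Nat.zero_le 1) (by omega)]
    have e0 : ∑ b ∈ Finset.Ico 0 1, (if P l b then cnt l P b n else 0) = 0 := by
      have : Finset.Ico 0 1 = {0} := rfl
      rw [this, Finset.sum_singleton, if_neg]
      rw [hcond]
      omega
    rw [e0, zero_add]
    rw [Finset.sum_congr rfl (g := fun _ => cnt l P 1 n) (fun b hb => by
      rw [Finset.mem_Ico] at hb
      rw [if_pos (by rw [hcond]; omega)]
      exact cnt_class a1 a2 L ha1 ha2 hL b 1 ⟨by omega, by omega⟩ ⟨le_refl 1, by omega⟩
        (by omega) n)]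
    rw [Finset.sum_const, Nat.card_Ico]
    simp [mul_comm]
  have e2 : ∑ b ∈ Finset.Ico (a1 + 1) (l + 1), (if P l b then cnt l P b n else 0) = 0 := by
    apply Finset.sum_eq_zero
    intro b hb
    rw [Finset.mem_Ico] at hb
    rw [if_neg]
    rw [hcond]
    omega
  rw [e1, e2, add_zero]

open scoped Classical in
include ha1 ha2 hL in
lemma rec_small (n : ℕ) :
    cnt (a1 + a2) (fun u v => cellMem L u v) 1 (n + 2) =
      ∑ m ∈ Finset.range (n + 1),
        (a1 * cnt (a1 + a2) (fun u v => cellMem L u v) 1 (m + 1) +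
          a2 * cnt (a1 + a2) (fun u v => cellMem L u v) (a1 + a2) (m + 1)) *
            cnt (a1 + a2) (fun u v => cellMem L u v) 1 (n + 1 - m) := by
  rw [cnt_rec]
  apply Finset.sum_congr rfl
  intro m _
  rw [childsum_small a1 a2 L ha1 ha2 hL]

open scoped Classical in
include ha1 ha2 hL in
lemma rec_big (n : ℕ) :
    cnt (a1 + a2) (fun u v => cellMem L u v) (a1 + a2) (n + 2) =
      ∑ m ∈ Finset.range (n + 1),
        (a1 * cnt (a1 + a2) (fun u v => cellMem L u v) 1 (m + 1)) *
            cnt (a1 + a2) (fun u v => cellMem L u v) (a1 + a2) (n + 1 - m) := by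
  rw [cnt_rec]
  apply Finset.sum_congr rfl
  intro m _
  rw [childsum_big a1 a2 L ha1 ha2 hL]

end FatHook

end PT

section PSeries

open PowerSeries PT

lemma coeff_conv (φ ψ : PowerSeries ℚ) (hφ : PowerSeries.coeff 0 φ = 0)
    (hψ : PowerSeries.coeff 0 ψ = 0) (n : ℕ) :
    PowerSeries.coeff (n + 2) (φ * ψ) =
      ∑ m ∈ Finset.range (n + 1),
        PowerSeries.coeff (m + 1) φ * PowerSeries.coeff (n + 1 - m) ψ := by
  rw [PowerSeries.coeff_mul, Finset.Nat.sum_antidiagonal_eq_sum_range_succ_mk]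
  rw [Finset.sum_range_succ'
    (fun k => PowerSeries.coeff k φ * PowerSeries.coeff (n + 2 - k) ψ) (n + 2)]
  rw [hφ, zero_mul, add_zero, Finset.sum_range_succ]
  have h0 : n + 2 - (n + 1 + 1) = 0 := by omega
  rw [h0, hψ, mul_zero, add_zero]
  apply Finset.sum_congr rfl
  intro m hm
  have : n + 2 - (m + 1) = n + 1 - m := by omega
  rw [this]

lemma coeff_one_conv (φ ψ : PowerSeries ℚ) (hφ : PowerSeries.coeff 0 φ = 0)
    (hψ : PowerSeries.coeff 0 ψ = 0) :
    PowerSeries.coeff 1 (φ * ψ) = 0 := by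
  rw [PowerSeries.coeff_mul, Finset.Nat.sum_antidiagonal_eq_sum_range_succ_mk]
  rw [Finset.sum_range_succ, Finset.sum_range_one]
  simp [hφ, hψ]

lemma coeff_zero_conv (φ ψ : PowerSeries ℚ) (hφ : PowerSeries.coeff 0 φ = 0) :
    PowerSeries.coeff 0 (φ * ψ) = 0 := by
  rw [PowerSeries.coeff_mul]
  simp [hφ]

end PSeries

/-- The generating function `M` of fat-hook `λ`-plane tree counts satisfies
`M³ + ((a₁ − a₂)z − 2)M² + (1 + 2a₂z)M − z(ℓ − a₁² z) = 0`. -/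
theorem stmt16 (a1 a2 : ℕ) (h1 : 1 ≤ a1) (h2 : 1 ≤ a2)
    (L : ℕ → ℕ)
    (hL : ∀ i, L i = if 1 ≤ i ∧ i ≤ a1 then a1 + a2 else if i ≤ a1 + a2 then a1 else 0)
    (M : PowerSeries ℚ)
    (hM0 : PowerSeries.coeff 0 M = 0)
    (hM : ∀ k : ℕ, PowerSeries.coeff (k + 1) M = (lambdaPlaneCount L (a1 + a2) k : ℚ)) :
    M ^ 3 + (PowerSeries.C ((a1 : ℚ) - (a2 : ℚ)) * PowerSeries.X - 2) * M ^ 2 +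
        (1 + 2 * PowerSeries.C ((a2 : ℚ)) * PowerSeries.X) * M -
        PowerSeries.X * (PowerSeries.C ((a1 : ℚ) + (a2 : ℚ)) -
          PowerSeries.C ((a1 : ℚ) ^ 2) * PowerSeries.X) = 0 := by

  classical
  set l := a1 + a2 with hldef
  set P : ℕ → ℕ → Prop := fun u v => cellMem L u v with hPdef
  set N1 : ℕ → ℕ := fun n => PT.cnt l P 1 n with hN1def
  set N2 : ℕ → ℕ := fun n => PT.cnt l P l n with hN2def
  set u : PowerSeries ℚ := PowerSeries.mk (fun n => (N1 n : ℚ)) with hudef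
  set v : PowerSeries ℚ := PowerSeries.mk (fun n => (N2 n : ℚ)) with hvdef
  have hN10 : N1 0 = 0 := PT.cnt_zero l P 1
  have hN20 : N2 0 = 0 := PT.cnt_zero l P l
  have hN11 : N1 1 = 1 := PT.cnt_one l P 1 le_rfl (by omega)
  have hN21 : N2 1 = 1 := PT.cnt_one l P l (by omega) le_rfl
  have hu0 : PowerSeries.coeff 0 u = 0 := by simp [hudef, hN10]
  have hv0 : PowerSeries.coeff 0 v = 0 := by simp [hvdef, hN20]
  set g : PowerSeries ℚ := PowerSeries.C (a1 : ℚ) * u + PowerSeries.C (a2 : ℚ) * v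
    with hgdef
  have hgc : ∀ n, PowerSeries.coeff n g = a1 * N1 n + a2 * N2 n := by
    intro n
    rw [hgdef, map_add, PowerSeries.coeff_C_mul, PowerSeries.coeff_C_mul, hudef, hvdef,
      PowerSeries.coeff_mk, PowerSeries.coeff_mk]
  have hg0 : PowerSeries.coeff 0 g = 0 := by rw [hgc, hN10, hN20]; simp
  set g2 : PowerSeries ℚ := PowerSeries.C (a1 : ℚ) * u with hg2def
  have hg2c : ∀ n, PowerSeries.coeff n g2 = a1 * N1 n := by
    intro n
    rw [hg2def, PowerSeries.coeff_C_mul, hudef, PowerSeries.coeff_mk]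
  have hg20 : PowerSeries.coeff 0 g2 = 0 := by rw [hg2c, hN10]; simp
  -- the two algebraic equations
  have E1 : u = PowerSeries.X + g * u := by
    apply PowerSeries.ext
    intro n
    match n with
    | 0 =>
      rw [map_add, PowerSeries.coeff_X, if_neg (by omega), coeff_zero_conv g u hg0]
      simpa using hu0
    | 1 =>
      rw [map_add, PowerSeries.coeff_X, if_pos rfl, coeff_one_conv g u hg0 hu0, add_zero]
      simp [hudef, hN11]
    | (n + 2 : ℕ) =>
      rw [map_add, PowerSeries.coeff_X, if_neg (by omega), zero_add,
        coeff_conv g u hg0 hu0]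
      have hrec : N1 (n + 2) = ∑ m ∈ Finset.range (n + 1),
          (a1 * N1 (m + 1) + a2 * N2 (m + 1)) * N1 (n + 1 - m) :=
        PT.rec_small a1 a2 L h1 h2 hL n
      rw [hudef]
      rw [PowerSeries.coeff_mk]
      show ((N1 (n + 2) : ℚ)) = _
      rw [hrec]
      push_cast
      apply Finset.sum_congr rfl
      intro m hm
      rw [hgc, PowerSeries.coeff_mk]
  have E2 : v = PowerSeries.X + g2 * v := by
    apply PowerSeries.ext
    intro n
    match n with
    | 0 =>
      rw [map_add, PowerSeries.coeff_X, if_neg (by omega), coeff_zero_conv g2 v hg20]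
      simpa using hv0
    | 1 =>
      rw [map_add, PowerSeries.coeff_X, if_pos rfl, coeff_one_conv g2 v hg20 hv0, add_zero]
      simp [hvdef, hN21]
    | (n + 2 : ℕ) =>
      rw [map_add, PowerSeries.coeff_X, if_neg (by omega), zero_add,
        coeff_conv g2 v hg20 hv0]
      have hrec : N2 (n + 2) = ∑ m ∈ Finset.range (n + 1),
          (a1 * N1 (m + 1)) * N2 (n + 1 - m) :=
        PT.rec_big a1 a2 L h1 h2 hL n
      rw [hvdef]
      rw [PowerSeries.coeff_mk]
      show ((N2 (n + 2) : ℚ)) = _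
      rw [hrec]
      push_cast
      apply Finset.sum_congr rfl
      intro m hm
      rw [hg2c, PowerSeries.coeff_mk]
  -- M = g
  have hMg : M = g := by
    apply PowerSeries.ext
    intro n
    match n with
    | 0 => rw [hM0, hg0]
    | (k + 1 : ℕ) =>
      rw [hM k, hgc]
      have : lambdaPlaneCount L l k =
          ∑ b ∈ Finset.range (l + 1), PT.cnt l P b (k + 1) := by
        rw [show lambdaPlaneCount L l k =
          Nat.card {t : LTree // t.size = k + 1 ∧ PT.Good l P t} from rfl]
        exact PT.total_cnt l P (k + 1)
      rw [this, PT.sum_cnt a1 a2 L h1 h2 hL (k + 1)]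
      push_cast
      rfl
  -- now pure algebra
  rw [hgdef] at E1
  rw [hg2def] at E2
  have hCsub : PowerSeries.C ((a1 : ℚ) - (a2 : ℚ)) =
      PowerSeries.C (a1 : ℚ) - PowerSeries.C (a2 : ℚ) := map_sub _ _ _
  have hCadd : PowerSeries.C ((a1 : ℚ) + (a2 : ℚ)) =
      PowerSeries.C (a1 : ℚ) + PowerSeries.C (a2 : ℚ) := map_add _ _ _
  have hCsq : PowerSeries.C ((a1 : ℚ) ^ 2) = PowerSeries.C (a1 : ℚ) ^ 2 := map_pow _ _ _
  rw [hMg, hgdef, hCsub, hCadd, hCsq]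
  set A : PowerSeries ℚ := PowerSeries.C (a1 : ℚ)
  set B : PowerSeries ℚ := PowerSeries.C (a2 : ℚ)
  set z : PowerSeries ℚ := (PowerSeries.X : PowerSeries ℚ)
  have s1 : B * v * (1 - (A * u + B * v)) =
      (A * u + B * v) * (1 - (A * u + B * v)) - A * z := by
    linear_combination (-A) * E1
  have s2 : B * v * (1 - (A * u + B * v)) = B * z - (B * v) ^ 2 := by
    linear_combination B * E2
  have s3 : (B * v) ^ 2 = (A + B) * z - (A * u + B * v) * (1 - (A * u + B * v)) := by
    linear_combination s2 - s1
  have s4 : ((A * u + B * v) * (1 - (A * u + B * v)) - A * z) ^ 2 =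
      ((A + B) * z - (A * u + B * v) * (1 - (A * u + B * v))) *
        (1 - (A * u + B * v)) ^ 2 := by
    calc ((A * u + B * v) * (1 - (A * u + B * v)) - A * z) ^ 2
        = (B * v * (1 - (A * u + B * v))) ^ 2 := by rw [s1]
      _ = (B * v) ^ 2 * (1 - (A * u + B * v)) ^ 2 := by ring
      _ = _ := by rw [s3]
  linear_combination s4
end
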